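/- Let ε > 0, χ ≥ 1 and λ > 0 satisfy √λ > ((1+2μ₁ε²)/χ)·(1 + μ₁(χ²+ε²)). Set p := 1 + 2μ₁ε² and δ := χ√λ/2. Then F_{p,δ}(0) < 0, and there exists y₀ > 0 such that F_{p,δ}(y₀) < 0. -/

import Mathlib

open Real Set

/-- The function `F_{p,δ}` from the paper, depending on parameters `ε`, `lam` (the
voltage parameter `λ`), `δ` and `p`; here `μ₁ = π²/4`. -/
noncomputable def Fpd (ε lam δ p y : ℝ) : ℝ :=
  π ^ 2 / 4 + (4 * δ * lam / (p * (lam * ε ^ 2 + 4 * δ ^ 2))) *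
    (π ^ 2 / 4 * ε ^ 2 / p + p / (4 * δ) + (p * (π ^ 2 / 4) * ε ^ 2 / (p + 1)) * y
      - 1 / (1 + y))

theorem Fpd_neg_at_zero_and_pos_point (ε lam χ : ℝ) (hε : 0 < ε) (hχ : 1 ≤ χ)
    (hlam : 0 < lam)
    (hbig : Real.sqrt lam >
      (1 + 2 * (π ^ 2 / 4) * ε ^ 2) / χ * (1 + (π ^ 2 / 4) * (χ ^ 2 + ε ^ 2)))
    (p δ : ℝ) (hp : p = 1 + 2 * (π ^ 2 / 4) * ε ^ 2) (hδ : δ = χ * Real.sqrt lam / 2) :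
    Fpd ε lam δ p 0 < 0 ∧ ∃ y₀ : ℝ, 0 < y₀ ∧ Fpd ε lam δ p y₀ < 0 := by
  have hχ0 : (0:ℝ) < χ := lt_of_lt_of_le one_pos hχ
  set s := Real.sqrt lam with hsdef
  have hs0 : 0 < s := Real.sqrt_pos.mpr hlam
  have hs : s ^ 2 = lam := Real.sq_sqrt hlam.le
  have hq : (0:ℝ) < π ^ 2 / 4 := by positivity
  have hp1 : 1 ≤ p := by rw [hp]; nlinarith
  have hp0 : 0 < p := lt_of_lt_of_le one_pos hp1
  have key : χ * s > p * (1 + (π ^ 2 / 4) * (χ ^ 2 + ε ^ 2)) := by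
    rw [div_mul_eq_mul_div, ← hp] at hbig
    have := (div_lt_iff₀ hχ0).mp hbig
    linarith
  have hδ0 : 0 < δ := by rw [hδ]; positivity
  have hF0 : Fpd ε lam δ p 0 < 0 := by
    rw [Fpd, hδ, ← hs]
    have h1 : s ^ 2 * ε ^ 2 + 4 * (χ * s / 2) ^ 2 = s ^ 2 * (ε ^ 2 + χ ^ 2) := by ring
    rw [h1]
    have hd1 : 0 < p * (s ^ 2 * (ε ^ 2 + χ ^ 2)) := by positivity
    have key2 : χ * s * (p + 1) > p ^ 2 * (π ^ 2 / 4) * (ε ^ 2 + χ ^ 2) + p ^ 2 := by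
      nlinarith [mul_lt_mul_of_pos_right key (by linarith : (0:ℝ) < p + 1),
        mul_pos hp0 (mul_pos hq (by positivity : (0:ℝ) < ε ^ 2 + χ ^ 2))]
    field_simp
    have h2 : π ^ 2 * ε ^ 2 = 2 * p - 2 := by rw [hp]; ring
    have hp1' : (0:ℝ) < p + 1 := by linarith
    have h3 : π ^ 2 * ε ^ 2 * (χ * s * (p + 1)) = (2 * p - 2) * (χ * s * (p + 1)) := by rw [h2]
    nlinarith [mul_lt_mul_of_pos_right key2 hp1', h3]
  refine ⟨hF0, ?_⟩
  have hc : ContinuousAt (fun y => Fpd ε lam δ p y) 0 := by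
    unfold Fpd
    apply ContinuousAt.add continuousAt_const
    apply ContinuousAt.mul continuousAt_const
    apply ContinuousAt.sub (by fun_prop)
    exact ContinuousAt.div continuousAt_const (by fun_prop) (by norm_num)
  have hev : ∀ᶠ y in nhds (0:ℝ), Fpd ε lam δ p y < 0 :=
    hc.eventually_lt continuousAt_const hF0
  have := (hev.filter_mono (nhdsWithin_le_nhds (s := Set.Ioi (0:ℝ)))).and
    self_mem_nhdsWithin
  obtain ⟨y₀, h1, h2⟩ := this.exists
  exact ⟨y₀, h2, h1⟩
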